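/- For complex numbers α_n with |α_n| < 1 (n ≥ -1, α_{-1} = -1), set ρ_n = √(1-|α_n|²) and Δ_n = α_{n+1} - α_{n-1}. Then ρ_m²(1 - conj(α_{m+1})·α_{m-1}) - ρ_{m-1}²(1 - conj(α_m)·α_{m-2}) = -α_{m-1}·ρ_m²·conj(Δ_m) - conj(α_m)·ρ_{m-1}²·Δ_{m-1}, and also (ρ_m ρ_{m+1})² - (ρ_{m-2}ρ_{m-1})² + conj(α_{m+1})ρ_m²Δ_m + α_{m-2}ρ_{m-1}²·conj(Δ_{m-1}) equals the same quantity. -/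

import Mathlib

open Complex

theorem stmt4 (α : ℤ → ℂ) (hneg : α (-1) = -1)
    (hlt : ∀ n : ℤ, 0 ≤ n → ‖α n‖ < 1) (m : ℤ) (hm : 1 ≤ m)
    (r : ℤ → ℂ) (hr : ∀ n, r n = ((1 - ‖α n‖ ^ 2 : ℝ) : ℂ))
    (Δ : ℤ → ℂ) (hΔ : ∀ n, Δ n = α (n + 1) - α (n - 1)) :
    (r m * (1 - (starRingEnd ℂ) (α (m + 1)) * α (m - 1)) -
       r (m - 1) * (1 - (starRingEnd ℂ) (α m) * α (m - 2)) =
       -α (m - 1) * r m * (starRingEnd ℂ) (Δ m) -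
         (starRingEnd ℂ) (α m) * r (m - 1) * Δ (m - 1)) ∧
    (r m * r (m + 1) - r (m - 2) * r (m - 1) +
       (starRingEnd ℂ) (α (m + 1)) * r m * Δ m +
       α (m - 2) * r (m - 1) * (starRingEnd ℂ) (Δ (m - 1)) =
       -α (m - 1) * r m * (starRingEnd ℂ) (Δ m) -
         (starRingEnd ℂ) (α m) * r (m - 1) * Δ (m - 1)) := by
  have key : ∀ n, r n = 1 - (starRingEnd ℂ) (α n) * α n := by
    intro n
    rw [hr]
    push_cast
    rw [show ((‖α n‖ : ℝ) : ℂ) ^ 2 = (starRingEnd ℂ) (α n) * α n from by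
      rw [← Complex.normSq_eq_conj_mul_self, Complex.normSq_eq_norm_sq]
      push_cast; ring]
  simp only [key, hΔ, map_sub,
    show m - 1 + 1 = m from by ring, show m + 1 - 1 = m from by ring,
    show m - 1 - 1 = m - 2 from by ring]
  constructor <;> ring
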